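/- The Warp-U transformed density preserves the normalising constant: if q is an unnormalised density on ℝ^d with ∫ q = c, and φ_mix(θ) = Σ_{k=1}^K w_k |S_k^{-1}| φ(S_k^{-1}(θ - μ_k)) is a Gaussian mixture with positive weights summing to 1 and invertible scale matrices S_k, then the transformed function q̃(θ*) = Σ_{k=1}^K φ(θ*) · q(S_k θ* + μ_k)/φ_mix(S_k θ* + μ_k) · w_k satisfies ∫_{ℝ^d} q̃(θ*) dθ* = c. -/

import Mathlib

open MeasureTheory Matrix Real

section Aux

variable {d : ℕ}

private lemma gauss_cont (C : ℝ) :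
    Continuous (fun x : Fin d → ℝ => C * Real.exp (-(∑ i, x i ^ 2) / 2)) := by
  apply continuous_const.mul
  apply Real.continuous_exp.comp
  apply Continuous.div_const
  apply Continuous.neg
  exact continuous_finset_sum _ fun i _ => (continuous_apply i).pow 2

private lemma cont_mulVec (M : Matrix (Fin d) (Fin d) ℝ) :
    Continuous (fun x : Fin d → ℝ => M.mulVec x) := by
  have : (fun x : Fin d → ℝ => M.mulVec x) = M.mulVecLin := by
    funext x; simp [Matrix.mulVecLin_apply]
  rw [this]
  exact LinearMap.continuous_on_pi _

end Aux

/-- The Warp-U transformed density preserves the normalising constant: if `q` is an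
unnormalised density on `ℝ^d` with `∫ q = c`, and
`φ_mix(θ) = ∑ₖ w_k |det S_k⁻¹| φ(S_k⁻¹(θ − μ_k))` is an everywhere-positive Gaussian
mixture with nonnegative weights summing to 1 and invertible scale matrices `S_k`, then
`q̃(θ*) = ∑ₖ φ(θ*) · q(S_k θ* + μ_k)/φ_mix(S_k θ* + μ_k) · w_k` satisfies `∫ q̃ = c`. -/
theorem warpU_preserves_normalising_constant
    (d K : ℕ) (hd : 0 < d) (hK : 0 < K)
    (w : Fin K → ℝ) (hw : ∀ k, 0 ≤ w k) (hwsum : ∑ k, w k = 1)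
    (μv : Fin K → (Fin d → ℝ))
    (S : Fin K → Matrix (Fin d) (Fin d) ℝ) (hS : ∀ k, IsUnit (S k).det)
    (φ : (Fin d → ℝ) → ℝ)
    (hφ : φ = fun x => (2 * π) ^ (-(d : ℝ) / 2) * Real.exp (-(∑ i, x i ^ 2) / 2))
    (φmix : (Fin d → ℝ) → ℝ)
    (hφmix : φmix = fun θ => ∑ k, w k * |((S k)⁻¹).det| * φ ((S k)⁻¹.mulVec (θ - μv k)))
    (hφmixpos : ∀ θ, 0 < φmix θ)
    (q : (Fin d → ℝ) → ℝ) (hq : ∀ θ, 0 ≤ q θ) (hqm : Measurable q)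
    (hqi : Integrable q volume)
    (c : ℝ) (hc : c = ∫ θ, q θ)
    (qt : (Fin d → ℝ) → ℝ)
    (hqt : qt = fun θs =>
      ∑ k, φ θs * (q ((S k).mulVec θs + μv k) / φmix ((S k).mulVec θs + μv k)) * w k) :
    ∫ θs, qt θs = c := by
  classical
  have hφc : Continuous φ := by rw [hφ]; exact gauss_cont _
  have hφnn : ∀ x, 0 ≤ φ x := by
    intro x; rw [hφ]
    exact mul_nonneg (Real.rpow_nonneg (by positivity) _) (Real.exp_nonneg _)
  have hφmixc : Continuous φmix := by
    rw [hφmix]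
    apply continuous_finset_sum _ fun k _ => ?_
    exact continuous_const.mul
      (hφc.comp ((cont_mulVec _).comp (continuous_id.sub continuous_const)))
  -- the ratio function
  set f : (Fin d → ℝ) → ℝ := fun θ => q θ / φmix θ with hf
  have hfm : Measurable f := hqm.div hφmixc.measurable
  have hfnn : ∀ θ, 0 ≤ f θ := fun θ => div_nonneg (hq θ) (hφmixpos θ).le
  -- the transformed-back summands
  set h : Fin K → (Fin d → ℝ) → ℝ :=
    fun k θ => w k * |((S k)⁻¹).det| * φ ((S k)⁻¹.mulVec (θ - μv k)) * f θ with hh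
  have hhnn : ∀ k θ, 0 ≤ h k θ := fun k θ =>
    mul_nonneg (mul_nonneg (mul_nonneg (hw k) (abs_nonneg _)) (hφnn _)) (hfnn _)
  have hhsum : ∀ θ, ∑ k, h k θ = q θ := by
    intro θ
    have h1 : ∑ k, h k θ = φmix θ * f θ := by
      rw [hφmix, Finset.sum_mul]
    rw [h1, hf]
    show φmix θ * (q θ / φmix θ) = q θ
    rw [mul_comm, div_mul_cancel₀ _ (hφmixpos θ).ne']
  have hhle : ∀ k θ, h k θ ≤ q θ := by
    intro k θ
    rw [← hhsum θ]
    exact Finset.single_le_sum (fun j _ => hhnn j θ) (Finset.mem_univ k)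
  have hhm : ∀ k, Measurable (h k) := by
    intro k
    apply Measurable.mul _ hfm
    exact measurable_const.mul
      ((hφc.comp ((cont_mulVec _).comp (continuous_id.sub continuous_const))).measurable)
  have hhint : ∀ k, Integrable (h k) volume := by
    intro k
    refine hqi.mono' (hhm k).aestronglyMeasurable (Filter.Eventually.of_forall fun θ => ?_)
    rw [Real.norm_eq_abs, abs_of_nonneg (hhnn k θ)]
    exact hhle k θ
  -- the transformed summands
  set g : Fin K → (Fin d → ℝ) → ℝ :=
    fun k θs => φ θs * (q ((S k).mulVec θs + μv k) / φmix ((S k).mulVec θs + μv k)) * w k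
    with hg
  have key : ∀ k, Integrable (g k) volume ∧ ∫ θs, g k θs = ∫ θ, h k θ := by
    intro k
    have hdet : (S k).det ≠ 0 := (hS k).ne_zero
    have habs : |(S k).det| ≠ 0 := abs_ne_zero.mpr hdet
    have hdetinv : ((S k)⁻¹).det = ((S k).det)⁻¹ := by
      rw [Matrix.det_nonsing_inv, Ring.inverse_eq_inv]
    have linv : ∀ x : Fin d → ℝ, (S k)⁻¹.mulVec ((S k).mulVec x + μv k - μv k) = x := by
      intro x
      rw [add_sub_cancel_right, Matrix.mulVec_mulVec, Matrix.nonsing_inv_mul _ (hS k),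
        Matrix.one_mulVec]
    have rinv : ∀ y : Fin d → ℝ, (S k).mulVec ((S k)⁻¹.mulVec (y - μv k)) + μv k = y := by
      intro y
      rw [Matrix.mulVec_mulVec, Matrix.mul_nonsing_inv _ (hS k), Matrix.one_mulVec,
        sub_add_cancel]
    let e : (Fin d → ℝ) ≃ᵐ (Fin d → ℝ) :=
      { toFun := fun x => (S k).mulVec x + μv k
        invFun := fun y => (S k)⁻¹.mulVec (y - μv k)
        left_inv := linv
        right_inv := rinv
        measurable_toFun := ((cont_mulVec (S k)).add continuous_const).measurable
        measurable_invFun :=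
          ((cont_mulVec (S k)⁻¹).comp (continuous_id.sub continuous_const)).measurable }
    have hemb : MeasurableEmbedding e := e.measurableEmbedding
    have hTm : Measurable (Matrix.toLin' (S k)) := by
      have h2 : ⇑(Matrix.toLin' (S k)) = fun x => (S k).mulVec x := by
        funext x; simp [Matrix.toLin'_apply]
      rw [h2]; exact (cont_mulVec (S k)).measurable
    have hmap : Measure.map e volume
        = ENNReal.ofReal |((S k).det)⁻¹| • (volume : Measure (Fin d → ℝ)) := by
      have h1 : (⇑e) = (fun y => y + μv k) ∘ ⇑(Matrix.toLin' (S k)) := by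
        funext x; simp [e, Matrix.toLin'_apply]
      rw [h1, ← Measure.map_map (measurable_add_const (μv k)) hTm,
        Real.map_matrix_volume_pi_eq_smul_volume_pi hdet, Measure.map_smul,
        (measurePreserving_add_right volume (μv k)).map_eq]
    have hcomp : g k = fun θs => |(S k).det| * h k (e θs) := by
      funext θs
      have h3 : (S k)⁻¹.mulVec (e θs - μv k) = θs := linv θs
      show φ θs * (q (e θs) / φmix (e θs)) * w k
        = |(S k).det| * (w k * |((S k)⁻¹).det| * φ ((S k)⁻¹.mulVec (e θs - μv k)) * f (e θs))
      rw [h3, hdetinv, abs_inv, hf]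
      field_simp
    have hint2 : Integrable (h k) (Measure.map e volume) := by
      rw [hmap]
      exact (hhint k).smul_measure ENNReal.ofReal_ne_top
    have hint3 : Integrable (fun θs => h k (e θs)) volume :=
      hemb.integrable_map_iff.mp hint2
    constructor
    · rw [hcomp]
      exact hint3.const_mul _
    · rw [hcomp]
      rw [MeasureTheory.integral_const_mul]
      have h4 : ∫ θs, h k (e θs) = ∫ θ, h k θ ∂(Measure.map e volume) :=
        (hemb.integral_map _).symm
      rw [h4, hmap, integral_smul_measure, ENNReal.toReal_ofReal (abs_nonneg _),
        abs_inv, smul_eq_mul, ← mul_assoc, mul_inv_cancel₀ habs, one_mul]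
  rw [hqt]
  show ∫ θs, ∑ k, g k θs = c
  rw [integral_finset_sum _ (fun k _ => (key k).1)]
  have h5 : ∑ k, ∫ θs, g k θs = ∑ k, ∫ θ, h k θ :=
    Finset.sum_congr rfl fun k _ => (key k).2
  rw [h5, ← integral_finset_sum _ (fun k _ => hhint k)]
  simp only [hhsum]
  exact hc.symm
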